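/- For any linear order α, the map h : ω^α → P_f(P_f(ω⊕α)) defined by h(⟨α₀,…,α_{n−1}⟩) = {{⟨0,i⟩,⟨1,α_i⟩} : i < n} is order reflecting: h(s) ≤ h(t) implies s ≼ t. -/

import Mathlib

/-- The order on finite subsets of a quasi order `r`:
`a ≤ b` iff each `x ∈ a` admits `y ∈ b` with `r x y`. -/
def PfLe {Q : Type*} (r : Q → Q → Prop) (a b : Finset Q) : Prop :=
  ∀ x ∈ a, ∃ y ∈ b, r x y

/-- `s` is a non-increasing finite sequence. -/
def NonIncr {α : Type*} [Preorder α] (s : List α) : Prop := s.Chain' (· ≥ ·)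

/-- The order on `ω^α` (finite non-increasing sequences). -/
def OmegaLe {α : Type*} [Preorder α] (s t : List α) : Prop :=
  (s.length ≤ t.length ∧ ∀ i (h₁ : i < s.length) (h₂ : i < t.length), s[i] = t[i]) ∨
  ∃ j, ∃ h₁ : j < s.length, ∃ h₂ : j < t.length,
    s[j] < t[j] ∧ ∀ i (hi : i < j), s[i]'(by omega) = t[i]'(by omega)

/-- The map `h : ω^α → P_f(P_f(ω⊕α))`, sending `⟨α₀,…,α_{n−1}⟩` to
`{{⟨0,i⟩,⟨1,α_i⟩} : i < n}`. -/
def hMap {α : Type*} [LinearOrder α] (s : List α) : Finset (Finset (ℕ ⊕ α)) :=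
  (((List.range s.length).zip s).map (fun p => ({Sum.inl p.1, Sum.inr p.2} : Finset (ℕ ⊕ α)))).toFinset

-- statement 3
theorem stmt3 {α : Type*} [LinearOrder α] (s t : List α)
    (hs : NonIncr s) (ht : NonIncr t)
    (h : PfLe (PfLe (Sum.LiftRel ((· ≤ ·) : ℕ → ℕ → Prop) ((· ≤ ·) : α → α → Prop)))
      (hMap s) (hMap t)) :
    OmegaLe s t := by
  classical
  have hmono : ∀ (i j : ℕ) (hij : i ≤ j) (hj : j < t.length),
      t[j] ≤ t[i]'(lt_of_le_of_lt hij hj) := by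
    intro i j hij hj
    rcases eq_or_lt_of_le hij with rfl | hlt
    · exact le_refl _
    · exact (List.pairwise_iff_getElem.mp (List.isChain_iff_pairwise.mp ht)) i j
        (lt_of_le_of_lt hij hj) hj hlt
  have key : ∀ i (hi : i < s.length), ∃ hi' : i < t.length, s[i] ≤ t[i] := by
    intro i hi
    have hmem : ({Sum.inl i, Sum.inr (s[i])} : Finset (ℕ ⊕ α)) ∈ hMap s := by
      simp only [hMap, List.mem_toFinset, List.mem_map]
      refine ⟨(i, s[i]), ?_, rfl⟩
      have : ((List.range s.length).zip s)[i]'(by simpa using hi) ∈ (List.range s.length).zip s := List.getElem_mem _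
      simpa using this
    obtain ⟨b, hb, hab⟩ := h _ hmem
    simp only [hMap, List.mem_toFinset, List.mem_map] at hb
    obtain ⟨⟨j, a⟩, hp, rfl⟩ := hb
    have hj : j < t.length ∧ t[j]? = some a := by
      have : t[j]? = some a := by
        obtain ⟨k, hk, hk'⟩ := List.mem_iff_getElem.mp hp
        simp only [List.getElem_zip, List.getElem_range, Prod.mk.injEq] at hk'
        obtain ⟨rfl, rfl⟩ := hk'
        simp only [List.length_zip, List.length_range] at hk
        exact List.getElem?_eq_getElem (by omega)
      exact ⟨by
        by_contra hc
        simp [List.getElem?_eq_none (le_of_not_gt hc)] at this, this⟩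
    obtain ⟨hj, ha⟩ := hj
    have ha' : a = t[j] := by
      rw [List.getElem?_eq_getElem hj] at ha
      exact (Option.some_injective _ ha).symm
    subst ha'
    -- i ≤ j
    obtain ⟨y, hy, hr⟩ := hab (Sum.inl i) (by simp)
    have hij : i ≤ j := by
      rcases Finset.mem_insert.mp hy with rfl | hy'
      · cases hr; assumption
      · rw [Finset.mem_singleton] at hy'; subst hy'; cases hr
    obtain ⟨y₂, hy₂, hr₂⟩ := hab (Sum.inr (s[i])) (by simp)
    have hst : s[i] ≤ t[j] := by
      rcases Finset.mem_insert.mp hy₂ with rfl | hy'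
      · cases hr₂
      · rw [Finset.mem_singleton] at hy'; subst hy'; cases hr₂; assumption
    exact ⟨lt_of_le_of_lt hij hj, le_trans hst (hmono i j hij hj)⟩
  have hlen : s.length ≤ t.length := by
    rcases Nat.eq_zero_or_pos s.length with h0 | h0
    · omega
    · obtain ⟨hi', _⟩ := key (s.length - 1) (by omega); omega
  by_cases hall : ∀ i (hi : i < s.length), s[i] = t[i]'(lt_of_lt_of_le hi hlen)
  · exact Or.inl ⟨hlen, fun i h1 h2 => hall i h1⟩
  · right
    have hex : ∃ j, j < s.length ∧ s[j]? ≠ t[j]? := by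
      by_contra hc
      push_neg at hc
      apply hall
      intro i hi
      have := hc i hi
      rw [List.getElem?_eq_getElem hi, List.getElem?_eq_getElem (lt_of_lt_of_le hi hlen)] at this
      exact Option.some_injective _ this
    let j := Nat.find hex
    obtain ⟨hj1, hjne⟩ : j < s.length ∧ s[j]? ≠ t[j]? := Nat.find_spec hex
    obtain ⟨hj2, hle⟩ := key j hj1
    have hne : s[j] ≠ t[j] := by
      intro he
      apply hjne
      rw [List.getElem?_eq_getElem hj1, List.getElem?_eq_getElem hj2, he]
    refine ⟨j, hj1, hj2, lt_of_le_of_ne hle hne, ?_⟩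
    intro i hi
    have hni := Nat.find_min hex hi
    push_neg at hni
    have := hni (by omega)
    rw [List.getElem?_eq_getElem (show i < s.length by omega),
      List.getElem?_eq_getElem (show i < t.length by omega)] at this
    exact Option.some_injective _ this
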